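/- Let d, N, K be positive integers, let H ∈ OB(d,N), let w ∈ ℝ^d be a unit vector, and suppose 0 < τ < 2(d−2)/(1 + (K mod 2)/K). Then there exists a unit vector a ∈ ℝ^d such that ⟨a, w⟩ = 0 and ‖Hᵀ a‖₂² < 2N / (τ·(1 + (K mod 2)/K) + 2). -/

import Mathlib

open scoped BigOperators Matrix

/-- The oblique manifold: matrices all of whose columns have unit Euclidean norm. -/
def OB (p : ℕ) (ι : Type) [Fintype ι] : Set (Matrix (Fin p) ι ℝ) :=
  {M | ∀ j, ∑ i, (M i j) ^ 2 = 1}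

theorem exists_orthogonal_direction_small_energy (d N K : ℕ) (hd : 1 ≤ d) (hN : 1 ≤ N)
    (hK : 1 ≤ K)
    (H : Matrix (Fin d) (Fin N) ℝ) (hH : H ∈ OB d (Fin N))
    (w : Fin d → ℝ) (hw : ∑ r, (w r) ^ 2 = 1)
    (τ : ℝ) (hτ : 0 < τ)
    (hτ' : τ < 2 * ((d : ℝ) - 2) / (1 + ((K % 2 : ℕ) : ℝ) / (K : ℝ))) :
    ∃ a : Fin d → ℝ, (∑ r, (a r) ^ 2 = 1) ∧ (∑ r, a r * w r = 0) ∧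
      (∑ j : Fin N, (∑ r, H r j * a r) ^ 2
        < 2 * (N : ℝ) / (τ * (1 + ((K % 2 : ℕ) : ℝ) / (K : ℝ)) + 2)) := by
  classical
  set c : ℝ := 1 + ((K % 2 : ℕ) : ℝ) / (K : ℝ) with hc
  have hK0 : (0:ℝ) < K := by exact_mod_cast hK
  have hc1 : (1:ℝ) ≤ c := by
    rw [hc]
    nlinarith [div_nonneg (Nat.cast_nonneg (K % 2) : (0:ℝ) ≤ _) hK0.le]
  have hc0 : (0:ℝ) < c := lt_of_lt_of_le one_pos hc1
  -- d ≥ 3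
  have hd3 : (2:ℝ) < d := by
    by_contra h
    push_neg at h
    have hnum : 2 * ((d : ℝ) - 2) ≤ 0 := by linarith
    have : 2 * ((d : ℝ) - 2) / c ≤ 0 := div_nonpos_of_nonpos_of_nonneg hnum hc0.le
    linarith
  have hd3' : 3 ≤ d := by exact_mod_cast hd3
  -- key inequality: τ * c + 2 < 2 * (d - 1)
  have hkey : τ * c + 2 < 2 * ((d:ℝ) - 1) := by
    have h := (lt_div_iff₀ hc0).mp hτ'
    linarith
  have hfr : Module.finrank ℝ (EuclideanSpace ℝ (Fin d)) = (d - 1) + 1 := by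
    simp only [finrank_euclideanSpace, Fintype.card_fin]
    omega
  haveI : Fact (Module.finrank ℝ (EuclideanSpace ℝ (Fin d)) = (d - 1) + 1) := ⟨hfr⟩
  set W : EuclideanSpace ℝ (Fin d) := (WithLp.equiv 2 (Fin d → ℝ)).symm w with hW
  have hWr : ∀ r, W r = w r := fun r => rfl
  have hwE : W ≠ 0 := by
    intro h
    have h2 : ∀ r, w r = 0 := by
      intro r
      have := congrArg (fun x : EuclideanSpace ℝ (Fin d) => x r) h
      simpa [hWr] using this
    simp [h2] at hw
  set b := OrthonormalBasis.fromOrthogonalSpanSingleton (𝕜 := ℝ) (d - 1) hwE with hb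
  set v : Fin (d - 1) → EuclideanSpace ℝ (Fin d) := fun i => (((ℝ ∙ W)ᗮ).subtypeₗᵢ ∘ b) i with hv
  have hon : Orthonormal ℝ v := b.orthonormal.comp_linearIsometry ((ℝ ∙ W)ᗮ.subtypeₗᵢ)
  set col : Fin N → EuclideanSpace ℝ (Fin d) :=
    fun j => (WithLp.equiv 2 (Fin d → ℝ)).symm (fun r => H r j) with hcol
  have hcolr : ∀ j r, col j r = H r j := fun j r => rfl
  have hcolnorm : ∀ j, ‖col j‖ ^ 2 = 1 := by
    intro j
    rw [EuclideanSpace.norm_eq, Real.sq_sqrt (by positivity)]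
    simpa [hcolr, Real.norm_eq_abs, sq_abs] using hH j
  have hbess : ∀ j, ∑ i : Fin (d-1), (inner ℝ (v i) (col j) : ℝ) ^ 2 ≤ 1 := by
    intro j
    have := hon.sum_inner_products_le (s := Finset.univ) (col j)
    simpa [Real.norm_eq_abs, sq_abs, hcolnorm j] using this
  have htot : ∑ i : Fin (d-1), ∑ j : Fin N, (inner ℝ (v i) (col j) : ℝ) ^ 2 ≤ N := by
    rw [Finset.sum_comm]
    calc ∑ j : Fin N, ∑ i : Fin (d-1), (inner ℝ (v i) (col j) : ℝ) ^ 2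
        ≤ ∑ _j : Fin N, (1:ℝ) := Finset.sum_le_sum fun j _ => hbess j
      _ = N := by simp
  have hd1 : (0:ℝ) < (d:ℝ) - 1 := by linarith
  have hcard : (Finset.univ : Finset (Fin (d-1))).card = d - 1 := by simp
  have hne : (Finset.univ : Finset (Fin (d-1))).Nonempty := by
    rw [← Finset.card_pos, hcard]; omega
  obtain ⟨i, _, hi⟩ := Finset.exists_le_of_sum_le hne (by
    calc ∑ i : Fin (d-1), ∑ j : Fin N, (inner ℝ (v i) (col j) : ℝ) ^ 2 ≤ N := htot
      _ = ∑ _i : Fin (d-1), (N : ℝ) / ((d:ℝ) - 1) := by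
          rw [Finset.sum_const, hcard, nsmul_eq_mul]
          have : ((d - 1 : ℕ) : ℝ) = (d:ℝ) - 1 := by
            have : (1:ℕ) ≤ d := hd
            push_cast [Nat.cast_sub this]; ring
          rw [this]; field_simp)
  refine ⟨fun r => v i r, ?_, ?_, ?_⟩
  · have h1 : ‖v i‖ = 1 := hon.1 i
    have : ‖v i‖ ^ 2 = 1 := by rw [h1]; norm_num
    rw [EuclideanSpace.norm_eq, Real.sq_sqrt (by positivity)] at this
    simpa [Real.norm_eq_abs, sq_abs] using this
  · have hmem : v i ∈ (ℝ ∙ W)ᗮ := (b i).2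
    have h0 : (inner ℝ W (v i) : ℝ) = 0 :=
      (Submodule.mem_orthogonal _ _).mp hmem W (Submodule.mem_span_singleton_self W)
    have : (inner ℝ (v i) W : ℝ) = 0 := by rwa [real_inner_comm]
    simpa [PiLp.inner_apply, RCLike.inner_apply, hWr] using h0
  · have heq : ∑ j : Fin N, (∑ r, H r j * v i r) ^ 2
        = ∑ j : Fin N, (inner ℝ (v i) (col j) : ℝ) ^ 2 := by
      refine Finset.sum_congr rfl fun j _ => ?_
      congr 1
    rw [heq]
    refine lt_of_le_of_lt hi ?_
    have hN0 : (0:ℝ) < N := by exact_mod_cast hN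
    rw [div_lt_div_iff₀ hd1 (by positivity)]
    nlinarith
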